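/- arXiv:1604.00506 — 3 statements merged into one kernel-verified Lean document; each statement's English description precedes it below -/
import Mathlib

section
/- Let (Ω, 𝒫) be a probability space, ψ₁,…,ψ_P : Ω → ℝ measurable, a > 0, and u⁽ˣ⁾, u⁽ʸ⁾, S ∈ ℝ^P. Define the P×P matrices J_x and J_y by [J_x]_{kj} = ∫_Ω (Σ_i u⁽ˣ⁾_i ψ_i) f'(Σ_{j'} S_{j'} ψ_{j'}) ψ_j ψ_k d𝒫 and [J_y]_{kj} = ∫_Ω (Σ_i u⁽ʸ⁾_i ψ_i) f'(Σ_{j'} S_{j'} ψ_{j'}) ψ_j ψ_k d𝒫, assuming all these integrands are integrable, where f'(s) = 2as(1−s)/(s² + a(1−s)²)². Then for all real constants c₁, c₂ the matrix c₁ J_x + c₂ J_y is symmetric, and consequently there exist an orthogonal matrix Q and a real diagonal matrix D with c₁ J_x + c₂ J_y = Q D Qᵀ; in particular all eigenvalues of c₁ J_x + c₂ J_y are real (the stochastic Galerkin formulation is hyperbolic for any order P). -/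
open MeasureTheory Matrix

/-- Proposition 1: the stochastic Galerkin formulation of the two-dimensional
Buckley–Leverett problem is hyperbolic: every real linear combination of the
Jacobian matrices `Jx`, `Jy` is symmetric, hence orthogonally diagonalizable
with real eigenvalues. -/
theorem stmt_1 {Ω : Type*} [MeasurableSpace Ω] (Pr : Measure Ω) [IsProbabilityMeasure Pr]
    (P : ℕ) (ψ : Fin P → Ω → ℝ) (hψ : ∀ i, Measurable (ψ i))
    (a : ℝ) (ha : 0 < a) (ux uy S : Fin P → ℝ)
    (f' : ℝ → ℝ)
    (hf' : ∀ s, f' s = 2 * a * s * (1 - s) / (s ^ 2 + a * (1 - s) ^ 2) ^ 2)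
    (hintx : ∀ j k : Fin P, Integrable (fun ω =>
      (∑ i, ux i * ψ i ω) * f' (∑ j', S j' * ψ j' ω) * ψ j ω * ψ k ω) Pr)
    (hinty : ∀ j k : Fin P, Integrable (fun ω =>
      (∑ i, uy i * ψ i ω) * f' (∑ j', S j' * ψ j' ω) * ψ j ω * ψ k ω) Pr)
    (Jx Jy : Matrix (Fin P) (Fin P) ℝ)
    (hJx : ∀ k j, Jx k j =
      ∫ ω, (∑ i, ux i * ψ i ω) * f' (∑ j', S j' * ψ j' ω) * ψ j ω * ψ k ω ∂Pr)
    (hJy : ∀ k j, Jy k j =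
      ∫ ω, (∑ i, uy i * ψ i ω) * f' (∑ j', S j' * ψ j' ω) * ψ j ω * ψ k ω ∂Pr) :
    ∀ c₁ c₂ : ℝ,
      (c₁ • Jx + c₂ • Jy).IsSymm ∧
      (∃ (Q D : Matrix (Fin P) (Fin P) ℝ), Qᵀ * Q = 1 ∧ D.IsDiag ∧
        c₁ • Jx + c₂ • Jy = Q * D * Qᵀ) ∧
      (∀ μ : ℂ, Module.End.HasEigenvalue
        (Matrix.mulVecLin ((c₁ • Jx + c₂ • Jy).map (fun x : ℝ => (x : ℂ)))) μ → μ.im = 0) := by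
  intro c₁ c₂
  -- symmetry of Jx and Jy
  have hJxs : Jx.IsSymm := by
    ext k j
    simp only [Matrix.transpose_apply]
    rw [hJx, hJx]
    congr 1
    ext ω
    ring
  have hJys : Jy.IsSymm := by
    ext k j
    simp only [Matrix.transpose_apply]
    rw [hJy, hJy]
    congr 1
    ext ω
    ring
  set M := c₁ • Jx + c₂ • Jy with hM
  have hMs : M.IsSymm := by
    unfold M
    unfold Matrix.IsSymm
    rw [Matrix.transpose_add, Matrix.transpose_smul, Matrix.transpose_smul, hJxs, hJys]
  refine ⟨hMs, ?_, ?_⟩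
  · -- spectral theorem
    have hH : M.IsHermitian := by
      rwa [Matrix.IsHermitian, Matrix.conjTranspose_eq_transpose_of_trivial]
    refine ⟨hH.eigenvectorUnitary, Matrix.diagonal (RCLike.ofReal ∘ hH.eigenvalues), ?_, ?_, ?_⟩
    · have := (Matrix.mem_unitaryGroup_iff'.mp hH.eigenvectorUnitary.2)
      rwa [Matrix.star_eq_conjTranspose, Matrix.conjTranspose_eq_transpose_of_trivial] at this
    · exact Matrix.isDiag_diagonal _
    · have := hH.spectral_theorem
      rwa [Unitary.conjStarAlgAut_apply, Matrix.star_eq_conjTranspose,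
        Matrix.conjTranspose_eq_transpose_of_trivial] at this
  · -- real eigenvalues
    intro μ hμ
    set B := M.map (fun x : ℝ => (x : ℂ)) with hB
    have hBH : B.IsHermitian := by
      ext i j
      simp only [hB, Matrix.conjTranspose_apply, Matrix.map_apply]
      rw [Complex.star_def, Complex.conj_ofReal, ← Matrix.transpose_apply M j i, hMs]
    have hmem : μ ∈ spectrum ℂ B := by
      have h1 : μ ∈ spectrum ℂ (Matrix.toLin' B) := by
        rw [Matrix.toLin'_apply']
        exact (Module.End.hasEigenvalue_iff_mem_spectrum.mp hμ)
      rwa [show Matrix.toLin' B = Matrix.toLinAlgEquiv' B from rfl,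
        AlgEquiv.spectrum_eq] at h1
    have h2 : Module.End.HasEigenvalue (Matrix.toEuclideanLin B) μ := by
      apply Module.End.HasEigenvalue.of_mem_spectrum
      rwa [Matrix.spectrum_toEuclideanLin (𝕜 := ℂ) (A := B)]
    have hsym : (Matrix.toEuclideanLin B).IsSymmetric :=
      Matrix.isHermitian_iff_isSymmetric.mp hBH
    have := hsym.conj_eigenvalue_eq_self h2
    exact Complex.conj_eq_iff_im.mp this
end

section
/- Let (Ω, 𝒫) be a probability space and ψ₁,…,ψ_P : Ω → ℝ measurable with all quadruple products ψ_hψ_iψ_jψ_k integrable; define [B(a,b)]_{jk} = Σ_{h,i} (∫_Ω ψ_h ψ_i ψ_j ψ_k d𝒫) a_h b_i for a, b ∈ ℝ^P. Let a > 0 (viscosity ratio), S, u ∈ ℝ^P, and let e₁ ∈ ℝ^P be the first standard basis vector. Suppose the matrix M = B(S,S) + a·B(e₁ − S, e₁ − S) is positive definite. Set w = M⁻¹ B(S,S) u. Then the matrix 2 M⁻¹ [ B(a(e₁ − S) − S, w) + B(S, u) ] is diagonalizable over ℝ with real eigenvalues: there exist an invertible real matrix V and a real diagonal matrix D with 2 M⁻¹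 [ B(a(e₁−S)−S, w) + B(S,u) ] = V D V⁻¹. -/
open MeasureTheory Matrix

/-- Proposition 2: hyperbolicity of the pseudo-spectral stochastic Galerkin
flux of the Buckley–Leverett problem.  If the system matrix
`M = B(S,S) + a • B(e₁ - S, e₁ - S)` is positive definite, then the flux
Jacobian `2 M⁻¹ (B(a•(e₁-S) - S, w) + B(S,u))` with `w = M⁻¹ B(S,S) u` is
diagonalizable over `ℝ` with real eigenvalues. -/
theorem stmt_4 {Ω : Type*} [MeasurableSpace Ω] (Pr : Measure Ω) [IsProbabilityMeasure Pr]
    (P : ℕ) (hP : 0 < P) (ψ : Fin P → Ω → ℝ) (hψ : ∀ i, Measurable (ψ i))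
    (hint : ∀ h i j k : Fin P,
      Integrable (fun ω => ψ h ω * ψ i ω * ψ j ω * ψ k ω) Pr)
    (B : (Fin P → ℝ) → (Fin P → ℝ) → Matrix (Fin P) (Fin P) ℝ)
    (hB : ∀ a b j k, B a b j k =
      ∑ h, ∑ i, (∫ ω, ψ h ω * ψ i ω * ψ j ω * ψ k ω ∂Pr) * a h * b i)
    (a : ℝ) (ha : 0 < a) (S u : Fin P → ℝ)
    (e₁ : Fin P → ℝ) (he₁ : e₁ = fun i : Fin P => if (i : ℕ) = 0 then (1 : ℝ) else 0)
    (M : Matrix (Fin P) (Fin P) ℝ)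
    (hM : M = B S S + a • B (e₁ - S) (e₁ - S))
    (hMpd : M.PosDef)
    (w : Fin P → ℝ) (hw : w = M⁻¹.mulVec ((B S S).mulVec u)) :
    ∃ (V D : Matrix (Fin P) (Fin P) ℝ),
      IsUnit V.det ∧ D.IsDiag ∧
        (2 : ℝ) • (M⁻¹ * (B (a • (e₁ - S) - S) w + B S u)) = V * D * V⁻¹ := by
  -- B is symmetric in (j,k)
  have hBsymm : ∀ x y : Fin P → ℝ, (B x y)ᵀ = B x y := by
    intro x y
    ext j k
    simp only [transpose_apply, hB]
    congr 1; ext h; congr 1; ext i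
    congr 2
    apply integral_congr_ae
    filter_upwards with ω
    ring
  set A : Matrix (Fin P) (Fin P) ℝ := B (a • (e₁ - S) - S) w + B S u with hA
  have hAsymm : Aᴴ = A := by
    rw [conjTranspose_eq_transpose_of_trivial, hA, transpose_add, hBsymm, hBsymm]
  -- square root of M
  open scoped MatrixOrder in
  set Q : Matrix (Fin P) (Fin P) ℝ := CFC.sqrt M with hQ
  have hQherm : Qᴴ = Q := by
    open scoped MatrixOrder in
    exact (CFC.sqrt_nonneg M).posSemidef.1
  have hQQ : Q * Q = M := by
    open scoped MatrixOrder in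
    exact CFC.sqrt_mul_sqrt_self M hMpd.posSemidef.nonneg
  have hdetM : IsUnit M.det := isUnit_iff_ne_zero.mpr hMpd.det_pos.ne'
  have hdetQ : IsUnit Q.det := by
    have h2 : Q.det * Q.det = M.det := by rw [← det_mul, hQQ]
    exact isUnit_of_mul_isUnit_left (h2 ▸ hdetM)
  have hQinv : Q⁻¹ * Q = 1 := nonsing_inv_mul Q hdetQ
  have hQinvH : (Q⁻¹)ᴴ = Q⁻¹ := by rw [conjTranspose_nonsing_inv, hQherm]
  -- the symmetrized matrix
  have hCherm : (Q⁻¹ * A * Q⁻¹).IsHermitian := by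
    rw [IsHermitian, conjTranspose_mul, conjTranspose_mul, hQinvH, hAsymm, mul_assoc]
  obtain ⟨U, E, hspec, hUinv, hEdiag, hUdet⟩ :
      ∃ U E : Matrix (Fin P) (Fin P) ℝ, Q⁻¹ * A * Q⁻¹ = U * E * star U ∧
        star U * U = 1 ∧ E.IsDiag ∧ IsUnit U.det :=
    ⟨(hCherm.eigenvectorUnitary : Matrix (Fin P) (Fin P) ℝ),
      diagonal (RCLike.ofReal ∘ hCherm.eigenvalues), hCherm.spectral_theorem,
      mem_unitaryGroup_iff'.mp hCherm.eigenvectorUnitary.2, isDiag_diagonal _,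
      UnitaryGroup.det_isUnit hCherm.eigenvectorUnitary⟩
  refine ⟨Q⁻¹ * U, (2:ℝ) • E, ?_, hEdiag.smul _, ?_⟩
  · rw [det_mul]
    exact (Q.isUnit_nonsing_inv_det hdetQ).mul hUdet
  · have hVinv : (Q⁻¹ * U)⁻¹ = star U * Q := by
      rw [Matrix.mul_inv_rev, nonsing_inv_nonsing_inv Q hdetQ, inv_eq_left_inv hUinv]
    have hMinv : M⁻¹ = Q⁻¹ * Q⁻¹ := by rw [← hQQ, Matrix.mul_inv_rev]
    have key : Q⁻¹ * Q⁻¹ * A = Q⁻¹ * (U * E * star U) * Q := by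
      rw [← hspec]
      calc Q⁻¹ * Q⁻¹ * A = Q⁻¹ * Q⁻¹ * A * (Q⁻¹ * Q) := by rw [hQinv, mul_one]
        _ = Q⁻¹ * (Q⁻¹ * A * Q⁻¹) * Q := by simp only [mul_assoc]
    rw [hVinv, hMinv, key]
    simp only [Matrix.smul_mul, Matrix.mul_smul, mul_assoc]
end

section
/- Let (Ω, 𝒫) be a probability space and ψ₁,…,ψ_P : Ω → ℝ measurable with all quadruple products ψ_hψ_iψ_jψ_k integrable; define [B(a,b)]_{jk} = Σ_{h,i} (∫_Ω ψ_h ψ_i ψ_j ψ_k d𝒫) a_h b_i. Let a > 0, u ∈ ℝ^P, e₁ the first standard basis vector, and define F : ℝ^P → ℝ^P by F(S) = (B(S,S) + a·B(e₁−S, e₁−S))⁻¹ · B(S,S) · u. At any point S where M(S) = B(S,S) + a·B(e₁−S, e₁−S) is invertible, F is differentiable and its Jacobian matrix (the matrix of the Fréchet derivative) equals 2 M(S)⁻¹ [ B(a(e₁−S) − S, F(S)) + B(S, u) ]. -/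
open MeasureTheory Matrix

attribute [local instance] Matrix.linftyOpNormedRing Matrix.linftyOpNormedAlgebra

set_option maxHeartbeats 1600000 in
lemma aux_deriv {P : ℕ} (c : Fin P → Fin P → Fin P → Fin P → ℝ)
    (hc1 : ∀ h i j k, c h i j k = c i h j k)
    (hc2 : ∀ h i j k, c h i j k = c h k j i)
    (B : (Fin P → ℝ) → (Fin P → ℝ) → Matrix (Fin P) (Fin P) ℝ)
    (hB : ∀ x y j k, B x y j k = ∑ h, ∑ i, c h i j k * x h * y i)
    (a : ℝ) (u e₁ : Fin P → ℝ)
    (M : (Fin P → ℝ) → Matrix (Fin P) (Fin P) ℝ)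
    (hM : ∀ S, M S = B S S + a • B (e₁ - S) (e₁ - S))
    (F : (Fin P → ℝ) → (Fin P → ℝ))
    (hF : ∀ S, F S = (M S)⁻¹.mulVec ((B S S).mulVec u))
    (S : Fin P → ℝ) (hMS : IsUnit (M S).det) :
    HasFDerivAt F
      (LinearMap.toContinuousLinearMap
        (Matrix.mulVecLin
          ((2 : ℝ) • ((M S)⁻¹ * (B (a • (e₁ - S) - S) (F S) + B S u))))) S := by
  classical
  -- bilinearity
  have hadd1 : ∀ x y z, B (x + y) z = B x z + B y z := by
    intro x y z; ext j k
    simp only [hB, Matrix.add_apply, ← Finset.sum_add_distrib]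
    refine Finset.sum_congr rfl fun h _ => Finset.sum_congr rfl fun i _ => by
      simp only [Pi.add_apply]; ring
  have hsmul1 : ∀ (r : ℝ) x z, B (r • x) z = r • B x z := by
    intro r x z; ext j k
    simp only [hB, Matrix.smul_apply, smul_eq_mul, Finset.mul_sum]
    refine Finset.sum_congr rfl fun h _ => Finset.sum_congr rfl fun i _ => by
      simp only [Pi.smul_apply, smul_eq_mul]; ring
  have hsymm : ∀ x y, B x y = B y x := by
    intro x y; ext j k
    simp only [hB]
    rw [Finset.sum_comm]
    refine Finset.sum_congr rfl fun h _ => Finset.sum_congr rfl fun i _ => by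
      rw [hc1]; ring
  have hadd2 : ∀ z x y, B z (x + y) = B z x + B z y := by
    intro z x y; rw [hsymm, hadd1, hsymm x z, hsymm y z]
  have hsmul2 : ∀ (r : ℝ) z x, B z (r • x) = r • B z x := by
    intro r z x; rw [hsymm, hsmul1, hsymm x z]
  have hneg1 : ∀ x z, B (-x) z = -(B x z) := by
    intro x z
    have := hsmul1 (-1) x z
    simpa [neg_one_smul] using this
  have hsub1 : ∀ x y z, B (x - y) z = B x z - B y z := by
    intro x y z; rw [sub_eq_add_neg, hadd1, hneg1, sub_eq_add_neg]
  have hneg2 : ∀ z x, B z (-x) = -(B z x) := by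
    intro z x; rw [hsymm, hneg1, hsymm]
  have hswap : ∀ x y z, (B x y).mulVec z = (B x z).mulVec y := by
    intro x y z; funext j
    simp only [Matrix.mulVec, dotProduct, hB, Finset.sum_mul]
    conv_lhs => rw [Finset.sum_comm]
    conv_rhs => rw [Finset.sum_comm]
    refine Finset.sum_congr rfl fun h _ => ?_
    conv_lhs => rw [Finset.sum_comm]
    refine Finset.sum_congr rfl fun i _ => Finset.sum_congr rfl fun k _ => by
      rw [hc2]; ring
  -- the quadratic map T ↦ B T T
  set C : Fin P → Fin P → Matrix (Fin P) (Fin P) ℝ :=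
    fun h i => Matrix.of fun j k => c h i j k with hC
  let linQ : (Fin P → ℝ) → ((Fin P → ℝ) →ₗ[ℝ] Matrix (Fin P) (Fin P) ℝ) := fun y =>
    { toFun := fun v => (2 : ℝ) • B y v
      map_add' := fun v w => by
        show (2 : ℝ) • B y (v + w) = (2 : ℝ) • B y v + (2 : ℝ) • B y w
        rw [hadd2, smul_add]
      map_smul' := fun r v => by
        show (2 : ℝ) • B y (r • v) = r • ((2 : ℝ) • B y v)
        rw [hsmul2]; rw [smul_smul, smul_smul, mul_comm] }
  have hQ : ∀ y, HasFDerivAt (fun T => B T T)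
      (LinearMap.toContinuousLinearMap (linQ y)) y := by
    intro y
    have h1 : ∀ T : Fin P → ℝ, B T T = ∑ h : Fin P, ∑ i : Fin P, (T h * T i) • C h i := by
      intro T; ext j k
      simp only [Matrix.sum_apply, Matrix.smul_apply, hC, Matrix.of_apply, smul_eq_mul, hB]
      refine Finset.sum_congr rfl fun h _ => Finset.sum_congr rfl fun i _ => by ring
    have h2 : HasFDerivAt
        (fun T : Fin P → ℝ => ∑ h : Fin P, ∑ i : Fin P, (T h * T i) • C h i)
        (∑ h : Fin P, ∑ i : Fin P,
          ((y h • (ContinuousLinearMap.proj i : (Fin P → ℝ) →L[ℝ] ℝ) + y i • (ContinuousLinearMap.proj h : (Fin P → ℝ) →L[ℝ] ℝ)).smulRight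
            (C h i))) y := by
      have hp : ∀ h : Fin P, HasFDerivAt (fun T : Fin P → ℝ => T h)
          (ContinuousLinearMap.proj h : (Fin P → ℝ) →L[ℝ] ℝ) y :=
        fun h => (ContinuousLinearMap.proj (R := ℝ) (φ := fun _ : Fin P => ℝ) h).hasFDerivAt
      exact HasFDerivAt.fun_sum fun h _ => HasFDerivAt.fun_sum fun i _ =>
        ((hp h).mul (hp i)).smul_const (C h i)
    have h3 : LinearMap.toContinuousLinearMap (linQ y)
        = ∑ h : Fin P, ∑ i : Fin P,
          ((y h • (ContinuousLinearMap.proj i : (Fin P → ℝ) →L[ℝ] ℝ) + y i • (ContinuousLinearMap.proj h : (Fin P → ℝ) →L[ℝ] ℝ)).smulRight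
            (C h i)) := by
      apply ContinuousLinearMap.ext; intro v
      ext j k
      simp only [ContinuousLinearMap.sum_apply, ContinuousLinearMap.smulRight_apply,
        ContinuousLinearMap.add_apply, ContinuousLinearMap.smul_apply,
        ContinuousLinearMap.proj_apply, LinearMap.coe_toContinuousLinearMap',
        Matrix.sum_apply, Matrix.smul_apply, hC, Matrix.of_apply, smul_eq_mul]
      show (2 : ℝ) • B y v j k = _
      simp only [Matrix.smul_apply, smul_eq_mul, hB, Finset.mul_sum]
      have expand : ∀ h i : Fin P, (y h * v i + y i * v h) * c h i j k
          = c h i j k * y h * v i + c h i j k * y i * v h := fun h i => by ring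
      have l2 : ∀ h i : Fin P, 2 * (c h i j k * y h * v i)
          = c h i j k * y h * v i + c h i j k * y h * v i := fun h i => by ring
      simp_rw [expand, l2, Finset.sum_add_distrib]
      have hsw : ∑ h : Fin P, ∑ i : Fin P, c h i j k * y h * v i
          = ∑ h : Fin P, ∑ i : Fin P, c h i j k * y i * v h := by
        refine Eq.trans Finset.sum_comm ?_
        exact Finset.sum_congr rfl fun h _ => Finset.sum_congr rfl fun i _ => by
          rw [hc1 i h]
      rw [hsw]
    rw [h3]
    have h4 : (fun T : Fin P → ℝ => B T T)
        = fun T : Fin P → ℝ => ∑ h : Fin P, ∑ i : Fin P, (T h * T i) • C h i := funext h1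
    rw [h4]
    exact h2
  -- derivative of M
  let linM : (Fin P → ℝ) →ₗ[ℝ] Matrix (Fin P) (Fin P) ℝ :=
    { toFun := fun v => (2 : ℝ) • B S v - (2 * a) • B (e₁ - S) v
      map_add' := fun v w => by
        show (2:ℝ) • B S (v + w) - (2*a) • B (e₁-S) (v + w)
            = ((2:ℝ) • B S v - (2*a) • B (e₁-S) v) + ((2:ℝ) • B S w - (2*a) • B (e₁-S) w)
        rw [hadd2, hadd2, smul_add, smul_add]; abel
      map_smul' := fun r v => by
        show (2:ℝ) • B S (r • v) - (2*a) • B (e₁-S) (r • v)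
            = r • ((2:ℝ) • B S v - (2*a) • B (e₁-S) v)
        rw [hsmul2, hsmul2]; module }
  have hMd : HasFDerivAt M (LinearMap.toContinuousLinearMap linM) S := by
    have haff : HasFDerivAt (fun T : Fin P → ℝ => e₁ - T)
        (-(ContinuousLinearMap.id ℝ (Fin P → ℝ))) S := by
      simpa using (hasFDerivAt_const (𝕜 := ℝ) e₁ S).sub (hasFDerivAt_id (𝕜 := ℝ) S)
    have h5 := (hQ S).add (((hQ (e₁ - S)).comp S haff).const_smul a)
    have h6 : M = fun T => B T T + a • B (e₁ - T) (e₁ - T) := funext hM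
    have heq : LinearMap.toContinuousLinearMap linM
        = LinearMap.toContinuousLinearMap (linQ S)
          + a • ((LinearMap.toContinuousLinearMap (linQ (e₁ - S))).comp
            (-(ContinuousLinearMap.id ℝ (Fin P → ℝ)))) := by
      refine ContinuousLinearMap.ext fun v => ?_
      simp only [ContinuousLinearMap.add_apply, ContinuousLinearMap.smul_apply,
        ContinuousLinearMap.coe_comp', Function.comp_apply, ContinuousLinearMap.neg_apply,
        ContinuousLinearMap.coe_id', id_eq, LinearMap.coe_toContinuousLinearMap']
      show (2:ℝ) • B S v - (2*a) • B (e₁ - S) v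
          = (2:ℝ) • B S v + a • ((2:ℝ) • B (e₁ - S) (-v))
      rw [hneg2]; module
    rw [h6, heq]
    exact h5
  have hinv : HasFDerivAt (Ring.inverse : Matrix (Fin P) (Fin P) ℝ → _)
      (-(ContinuousLinearMap.mulLeftRight ℝ _ (M S)⁻¹ (M S)⁻¹)) (M S) := by
    obtain ⟨U, hu⟩ := (Matrix.isUnit_iff_isUnit_det _).2 hMS
    rw [← hu, ← Matrix.coe_units_inv]
    exact hasFDerivAt_ringInverse U
  have hNd : HasFDerivAt (fun T => (M T)⁻¹)
      ((-(ContinuousLinearMap.mulLeftRight ℝ _ (M S)⁻¹ (M S)⁻¹)).comp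
        (LinearMap.toContinuousLinearMap linM)) S := by
    have h0 : (fun T => (M T)⁻¹)
        = (Ring.inverse : Matrix (Fin P) (Fin P) ℝ → _) ∘ M :=
      funext fun T => Matrix.nonsing_inv_eq_ringInverse _
    rw [h0]
    exact hinv.comp S hMd
  have hGd := hNd.mul' (hQ S)
  let linU : Matrix (Fin P) (Fin P) ℝ →ₗ[ℝ] (Fin P → ℝ) :=
    { toFun := fun A => A.mulVec u
      map_add' := fun A A' => Matrix.add_mulVec A A' u
      map_smul' := fun r A => Matrix.smul_mulVec r A u }
  haveI : @ContinuousSMul (Matrix (Fin P) (Fin P) ℝ) (Matrix (Fin P) (Fin P) ℝ) _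
      (Matrix.linftyOpNormedRing (n := Fin P) (α := ℝ)).toUniformSpace.toTopologicalSpace
      instTopologicalSpaceMatrix := by
    have hid : @Continuous (Matrix (Fin P) (Fin P) ℝ) (Matrix (Fin P) (Fin P) ℝ)
        (Matrix.linftyOpNormedRing (n := Fin P) (α := ℝ)).toUniformSpace.toTopologicalSpace
        instTopologicalSpaceMatrix id :=
      (LinearMap.id : Matrix (Fin P) (Fin P) ℝ →ₗ[ℝ] Matrix (Fin P) (Fin P) ℝ).continuous_of_finiteDimensional
    constructor
    exact continuous_mul.comp ((hid.comp continuous_fst).prodMk continuous_snd)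
  have hFd : HasFDerivAt F ((LinearMap.toContinuousLinearMap linU).comp
      ((M S)⁻¹ • (LinearMap.toContinuousLinearMap (linQ S)) +
        ((-(ContinuousLinearMap.mulLeftRight ℝ _ (M S)⁻¹ (M S)⁻¹)).comp
          (LinearMap.toContinuousLinearMap linM)).smulRight (B S S))) S := by
    have h8 : F = fun T => linU ((fun y => (M y)⁻¹ * B y y) T) := by
      funext T; rw [hF]
      show _ = ((M T)⁻¹ * B T T) *ᵥ u
      rw [← Matrix.mulVec_mulVec]
    rw [h8]
    exact ((LinearMap.toContinuousLinearMap linU).hasFDerivAt).comp S hGd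
  have hfin : LinearMap.toContinuousLinearMap
        (Matrix.mulVecLin
          ((2 : ℝ) • ((M S)⁻¹ * (B (a • (e₁ - S) - S) (F S) + B S u))))
      = (LinearMap.toContinuousLinearMap linU).comp
      ((M S)⁻¹ • (LinearMap.toContinuousLinearMap (linQ S)) +
        ((-(ContinuousLinearMap.mulLeftRight ℝ _ (M S)⁻¹ (M S)⁻¹)).comp
          (LinearMap.toContinuousLinearMap linM)).smulRight (B S S)) := by
    refine ContinuousLinearMap.ext fun v => ?_
    simp only [ContinuousLinearMap.coe_comp', Function.comp_apply,
      ContinuousLinearMap.add_apply, ContinuousLinearMap.smul_apply,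
      ContinuousLinearMap.smulRight_apply, ContinuousLinearMap.neg_apply,
      ContinuousLinearMap.mulLeftRight_apply, LinearMap.coe_toContinuousLinearMap']
    show ((2 : ℝ) • ((M S)⁻¹ * (B (a • (e₁ - S) - S) (F S) + B S u))) *ᵥ v
        = ((M S)⁻¹ • ((2:ℝ) • B S v)
            + (-((M S)⁻¹ * ((2:ℝ) • B S v - (2*a) • B (e₁ - S) v) * (M S)⁻¹)) • (B S S)) *ᵥ u
    have hLv : (2:ℝ) • B S v - (2*a) • B (e₁ - S) v
        = -((2:ℝ) • B (a • (e₁ - S) - S) v) := by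
      conv_rhs => rw [hsub1, hsmul1]
      module
    have lhs_eq : ((2 : ℝ) • ((M S)⁻¹ * (B (a • (e₁ - S) - S) (F S) + B S u))) *ᵥ v
        = (2:ℝ) • ((M S)⁻¹ *ᵥ ((B (a • (e₁ - S) - S) v) *ᵥ (F S) + (B S v) *ᵥ u)) := by
      rw [Matrix.smul_mulVec, ← Matrix.mulVec_mulVec, Matrix.add_mulVec,
        hswap _ (F S) v, hswap S u v]
    have rhs_eq : ((M S)⁻¹ • ((2:ℝ) • B S v)
            + (-((M S)⁻¹ * ((2:ℝ) • B S v - (2*a) • B (e₁ - S) v) * (M S)⁻¹)) • (B S S)) *ᵥ u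
        = (2:ℝ) • ((M S)⁻¹ *ᵥ ((B (a • (e₁ - S) - S) v) *ᵥ (F S) + (B S v) *ᵥ u)) := by
      rw [Matrix.add_mulVec, smul_eq_mul, smul_eq_mul, hLv]
      simp only [mul_neg, neg_mul, neg_neg]
      simp only [← Matrix.mulVec_mulVec]
      rw [← hF S]
      simp only [Matrix.smul_mulVec, Matrix.mulVec_smul]
      rw [Matrix.mulVec_add, smul_add]
      exact add_comm _ _
    exact lhs_eq.trans rhs_eq.symm
  rw [hfin]
  exact hFd

/-- The Jacobian (Fréchet derivative) of the pseudo-spectral stochastic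
Galerkin flux `F S = (B(S,S) + a•B(e₁-S,e₁-S))⁻¹ B(S,S) u`: at any point `S`
where `M S = B(S,S) + a•B(e₁-S,e₁-S)` is invertible, `F` is differentiable
with Jacobian matrix `2 (M S)⁻¹ (B(a•(e₁-S) - S, F S) + B(S, u))`. -/
theorem stmt_5 {Ω : Type*} [MeasurableSpace Ω] (Pr : Measure Ω) [IsProbabilityMeasure Pr]
    (P : ℕ) (hP : 0 < P) (ψ : Fin P → Ω → ℝ) (hψ : ∀ i, Measurable (ψ i))
    (hint : ∀ h i j k : Fin P,
      Integrable (fun ω => ψ h ω * ψ i ω * ψ j ω * ψ k ω) Pr)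
    (B : (Fin P → ℝ) → (Fin P → ℝ) → Matrix (Fin P) (Fin P) ℝ)
    (hB : ∀ a b j k, B a b j k =
      ∑ h, ∑ i, (∫ ω, ψ h ω * ψ i ω * ψ j ω * ψ k ω ∂Pr) * a h * b i)
    (a : ℝ) (ha : 0 < a) (u : Fin P → ℝ)
    (e₁ : Fin P → ℝ) (he₁ : e₁ = fun i : Fin P => if (i : ℕ) = 0 then (1 : ℝ) else 0)
    (M : (Fin P → ℝ) → Matrix (Fin P) (Fin P) ℝ)
    (hM : ∀ S, M S = B S S + a • B (e₁ - S) (e₁ - S))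
    (F : (Fin P → ℝ) → (Fin P → ℝ))
    (hF : ∀ S, F S = (M S)⁻¹.mulVec ((B S S).mulVec u))
    (S : Fin P → ℝ) (hMS : IsUnit (M S).det) :
    HasFDerivAt F
      (LinearMap.toContinuousLinearMap
        (Matrix.mulVecLin
          ((2 : ℝ) • ((M S)⁻¹ * (B (a • (e₁ - S) - S) (F S) + B S u))))) S := by
  have hc1 : ∀ h i j k : Fin P,
      (∫ ω, ψ h ω * ψ i ω * ψ j ω * ψ k ω ∂Pr)
        = ∫ ω, ψ i ω * ψ h ω * ψ j ω * ψ k ω ∂Pr := by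
    intro h i j k; congr 1; funext ω; ring
  have hc2 : ∀ h i j k : Fin P,
      (∫ ω, ψ h ω * ψ i ω * ψ j ω * ψ k ω ∂Pr)
        = ∫ ω, ψ h ω * ψ k ω * ψ j ω * ψ i ω ∂Pr := by
    intro h i j k; congr 1; funext ω; ring
  exact aux_deriv (fun h i j k => ∫ ω, ψ h ω * ψ i ω * ψ j ω * ψ k ω ∂Pr)
    hc1 hc2 B hB a u e₁ M hM F hF S hMS
end
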